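/- Let q > 2 be a real number. For all real k, l with k + l > 0, one has (k+l)^{q-1} = |k|^{q-2}k + (q-1)|k|^{q-3}k·l + b'(k,l)|k|^{q-3}l² + b''(k,l)|l|^{q-1}, where b', b'' are functions bounded uniformly in (k,l) (depending only on q). -/

import Mathlib

open Real

lemma abs_le_of_mem_uIcc_zero {t x : ℝ} (h : x ∈ Set.uIcc (0:ℝ) t) : |x| ≤ |t| := by
  rw [Set.mem_uIcc] at h
  rcases h with ⟨h1, h2⟩ | ⟨h1, h2⟩ <;> rw [abs_le] <;>
    constructor <;> cases abs_cases t <;> linarith [abs_nonneg t]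

lemma mvt_abs (g g' : ℝ → ℝ) (t C : ℝ)
    (hd : ∀ x ∈ Set.uIcc (0:ℝ) t, HasDerivAt g (g' x) x)
    (hb : ∀ x ∈ Set.uIcc (0:ℝ) t, |g' x| ≤ C) :
    |g t - g 0| ≤ C * |t| := by
  have := Convex.norm_image_sub_le_of_norm_hasDerivWithin_le
    (f := g) (f' := g') (C := C) (s := Set.uIcc (0:ℝ) t)
    (fun x hx => (hd x hx).hasDerivWithinAt) hb (convex_uIcc 0 t)
    Set.left_mem_uIcc Set.right_mem_uIcc
  simpa [Real.norm_eq_abs] using this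

lemma taylor_bound (p : ℝ) (hp : 1 < p) :
    ∃ M : ℝ, 0 < M ∧ ∀ t : ℝ, -1 < t → |t| ≤ 1 →
      |(1 + t) ^ p - 1 - p * t| ≤ M * t ^ 2 := by
  set D : ℝ := (2:ℝ) ^ |p - 2| with hD
  have hDpos : 0 < D := Real.rpow_pos_of_pos two_pos _
  have h2p : (0:ℝ) < (2:ℝ) ^ p := Real.rpow_pos_of_pos two_pos _
  refine ⟨max (p * (p - 1) * D) (4 * ((2:ℝ) ^ p + 1 + p)) + 1, by positivity, ?_⟩
  intro t ht1 ht2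
  set M := max (p * (p - 1) * D) (4 * ((2:ℝ) ^ p + 1 + p)) with hM
  have hMpos : 0 < M := lt_max_of_lt_right (by positivity)
  have key : |(1 + t) ^ p - 1 - p * t| ≤ M * t ^ 2 := by
    rcases le_or_gt |t| (1/2) with hhalf | hhalf
    · -- Taylor via two MVTs
      -- bound on (1+x)^(p-2) for |x| ≤ 1/2
      have hbase : ∀ x : ℝ, |x| ≤ 1/2 → (1 + x) ^ (p - 2) ≤ D := by
        intro x hx
        rw [abs_le] at hx
        rcases le_or_gt 2 p with h2 | h2
        · have : |p - 2| = p - 2 := abs_of_nonneg (by linarith)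
          rw [hD, this]
          exact Real.rpow_le_rpow (by linarith) (by linarith) (by linarith)
        · have habs : |p - 2| = -(p - 2) := abs_of_neg (by linarith)
          have : (1 + x) ^ (p - 2) ≤ (1/2 : ℝ) ^ (p - 2) :=
            Real.rpow_le_rpow_of_nonpos (by norm_num) (by linarith) (by linarith)
          refine this.trans (le_of_eq ?_)
          rw [hD, habs, one_div, Real.inv_rpow two_pos.le, ← Real.rpow_neg two_pos.le]
      have inner : ∀ x : ℝ, |x| ≤ 1/2 → |(1 + x) ^ (p - 1) - 1| ≤ (p - 1) * D * |x| := by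
        intro x hx
        have h := mvt_abs (fun y => (1 + y) ^ (p - 1))
            (fun y => (p - 1) * (1 + y) ^ (p - 2)) x ((p - 1) * D) ?_ ?_
        · simpa [Real.one_rpow] using h
        · intro y hy
          have hy' : |y| ≤ 1/2 := le_trans (abs_le_of_mem_uIcc_zero hy) hx
          have h1y : (1:ℝ) + y ≠ 0 := by
            rw [abs_le] at hy'; intro h0; linarith
          have hd := HasDerivAt.rpow_const (p := p - 1)
            ((hasDerivAt_id y).const_add 1) (Or.inl h1y)
          convert hd using 1
          all_goals simp only [id]
          rw [show p - 1 - 1 = p - 2 by ring]; ring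
        · intro y hy
          have hy' : |y| ≤ 1/2 := le_trans (abs_le_of_mem_uIcc_zero hy) hx
          have h1y : (0:ℝ) < 1 + y := by rw [abs_le] at hy'; linarith
          rw [abs_mul, abs_of_nonneg (by linarith : (0:ℝ) ≤ p - 1),
            abs_of_nonneg (Real.rpow_nonneg h1y.le _)]
          exact mul_le_mul_of_nonneg_left (hbase y hy') (by linarith)
      have outer := mvt_abs (fun y => (1 + y) ^ p - 1 - p * y)
          (fun y => p * ((1 + y) ^ (p - 1) - 1)) t (p * (p - 1) * D * |t|) ?_ ?_
      · have h0 : ((1:ℝ) + 0) ^ p - 1 - p * 0 = 0 := by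
          simp [Real.one_rpow]
        rw [h0, sub_zero] at outer
        refine outer.trans ?_
        have : p * (p - 1) * D * |t| * |t| = (p * (p - 1) * D) * t ^ 2 := by
          rw [mul_assoc, ← sq_abs t]; ring
        rw [this]
        exact mul_le_mul_of_nonneg_right (le_max_left _ _) (sq_nonneg t)
      · intro y hy
        have hy' : |y| ≤ 1/2 := le_trans (abs_le_of_mem_uIcc_zero hy) hhalf
        have h1y : (1:ℝ) + y ≠ 0 := by rw [abs_le] at hy'; intro h0; linarith
        have hd1 := HasDerivAt.rpow_const (p := p)
          ((hasDerivAt_id y).const_add 1) (Or.inl h1y)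
        have hd2 : HasDerivAt (fun y => (1 + y) ^ p - 1 - p * y)
            (1 * p * (1 + y) ^ (p - 1) - p * 1) y :=
          ((hd1.sub_const 1).sub ((hasDerivAt_id y).const_mul p))
        convert hd2 using 1
        ring
      · intro y hy
        have hy1 : |y| ≤ |t| := abs_le_of_mem_uIcc_zero hy
        have hy' : |y| ≤ 1/2 := le_trans hy1 hhalf
        rw [abs_mul, abs_of_nonneg (by linarith : (0:ℝ) ≤ p)]
        calc p * |(1 + y) ^ (p - 1) - 1| ≤ p * ((p - 1) * D * |y|) :=
              mul_le_mul_of_nonneg_left (inner y hy') (by linarith)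
          _ = p * (p - 1) * D * |y| := by ring
          _ ≤ p * (p - 1) * D * |t| :=
              mul_le_mul_of_nonneg_left hy1 ((mul_pos (mul_pos (by linarith : (0:ℝ) < p) (by linarith : (0:ℝ) < p - 1)) hDpos).le)
    · -- crude bound
      have h1t : 0 < 1 + t := by linarith
      have h1t2 : 1 + t ≤ 2 := by cases abs_cases t <;> linarith
      have hub : (1 + t) ^ p ≤ (2:ℝ) ^ p :=
        Real.rpow_le_rpow h1t.le h1t2 (by linarith)
      have hlb : (0:ℝ) ≤ (1 + t) ^ p := Real.rpow_nonneg h1t.le _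
      have hpt : |p * t| ≤ p := by
        rw [abs_mul, abs_of_pos (by linarith : (0:ℝ) < p)]
        nlinarith [abs_nonneg t]
      have ht2' : (1:ℝ)/4 ≤ t ^ 2 := by nlinarith [sq_abs t]
      have hMge : 4 * ((2:ℝ) ^ p + 1 + p) ≤ M := le_max_right _ _
      have : |(1 + t) ^ p - 1 - p * t| ≤ (2:ℝ) ^ p + 1 + p := by
        cases abs_cases ((1 + t) ^ p - 1 - p * t) <;> cases abs_cases (p * t) <;> nlinarith
      nlinarith [sq_nonneg t]
  nlinarith [sq_nonneg t]

open MeasureTheory Filter Topology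

/-- Elementary expansion: for `q > 2`, there are uniformly bounded `b', b''` with
`(k+l)^(q-1) = |k|^(q-2) k + (q-1)|k|^(q-3) k l + b'(k,l)|k|^(q-3) l² + b''(k,l)|l|^(q-1)`
whenever `k + l > 0`. -/
theorem elementary_expansion (q : ℝ) (hq : 2 < q) :
    ∃ C : ℝ, 0 < C ∧ ∃ b' b'' : ℝ → ℝ → ℝ,
      ∀ k l : ℝ, 0 < k + l →
        |b' k l| ≤ C ∧ |b'' k l| ≤ C ∧
        (k + l) ^ (q - 1) =
          |k| ^ (q - 2) * k + (q - 1) * |k| ^ (q - 3) * k * l +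
            b' k l * |k| ^ (q - 3) * l ^ 2 + b'' k l * |l| ^ (q - 1) := by
  obtain ⟨M, hMpos, hM⟩ := taylor_bound (q - 1) (by linarith)
  have h2q : (0:ℝ) < (2:ℝ) ^ (q - 1) := Real.rpow_pos_of_pos two_pos _
  refine ⟨max M ((2:ℝ) ^ (q - 1) + q), lt_max_of_lt_left hMpos,
    (fun k l => if |k| ≤ |l| then 0 else
      ((k + l) ^ (q - 1) - |k| ^ (q - 2) * k - (q - 1) * |k| ^ (q - 3) * k * l) /
        (|k| ^ (q - 3) * l ^ 2)),
    (fun k l => if |k| ≤ |l| then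
      ((k + l) ^ (q - 1) - |k| ^ (q - 2) * k - (q - 1) * |k| ^ (q - 3) * k * l) /
        |l| ^ (q - 1) else 0), ?_⟩
  intro k l hkl
  set C := max M ((2:ℝ) ^ (q - 1) + q) with hC
  by_cases hcase : |k| ≤ |l|
  · -- |k| ≤ |l| : put everything in b''
    have hl : l ≠ 0 := by
      intro h0
      rw [h0, abs_zero, abs_nonpos_iff] at hcase
      rw [hcase, h0] at hkl; norm_num at hkl
    have hlp : 0 < |l| := abs_pos.mpr hl
    have hlq : 0 < |l| ^ (q - 1) := Real.rpow_pos_of_pos hlp _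
    simp only [if_pos hcase]
    have hbound : |(k + l) ^ (q - 1) - |k| ^ (q - 2) * k - (q - 1) * |k| ^ (q - 3) * k * l|
        ≤ ((2:ℝ) ^ (q - 1) + q) * |l| ^ (q - 1) := by
      have hkl2 : k + l ≤ 2 * |l| := by
        have := le_abs_self k; have := le_abs_self l; linarith
      have hA : (k + l) ^ (q - 1) ≤ (2 * |l|) ^ (q - 1) :=
        Real.rpow_le_rpow hkl.le hkl2 (by linarith)
      have h2l : (2 * |l|) ^ (q - 1) = (2:ℝ) ^ (q - 1) * |l| ^ (q - 1) :=
        Real.mul_rpow (by norm_num) (abs_nonneg l)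
      have hlq2 : |l| ^ (q - 2) * |l| = |l| ^ (q - 1) := by
        rw [show q - 1 = q - 2 + 1 by ring, Real.rpow_add_one hlp.ne']
      have hB : |k| ^ (q - 2) * |k| ≤ |l| ^ (q - 1) := by
        rw [← hlq2]
        exact mul_le_mul (Real.rpow_le_rpow (abs_nonneg k) hcase (by linarith))
          hcase (abs_nonneg k) (Real.rpow_nonneg (abs_nonneg l) _)
      have hCk : |k| ^ (q - 3) * |k| ≤ |l| ^ (q - 2) := by
        rcases eq_or_ne k 0 with hk0 | hk0
        · rw [hk0, abs_zero, mul_zero]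
          exact Real.rpow_nonneg (abs_nonneg l) _
        · have hkp : 0 < |k| := abs_pos.mpr hk0
          rw [show |k| ^ (q - 3) * |k| = |k| ^ (q - 2) by
            rw [show q - 2 = q - 3 + 1 by ring, Real.rpow_add_one hkp.ne']]
          exact Real.rpow_le_rpow (abs_nonneg k) hcase (by linarith)
      have hT1 : |(k + l) ^ (q - 1)| = (k + l) ^ (q - 1) :=
        abs_of_nonneg (Real.rpow_nonneg hkl.le _)
      have hT2 : |(|k| ^ (q - 2) * k)| = |k| ^ (q - 2) * |k| := by
        rw [abs_mul, abs_of_nonneg (Real.rpow_nonneg (abs_nonneg k) _)]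
      have hT3 : |(q - 1) * |k| ^ (q - 3) * k * l| = (q - 1) * (|k| ^ (q - 3) * |k|) * |l| := by
        rw [abs_mul, abs_mul, abs_mul, abs_of_nonneg (by linarith : (0:ℝ) ≤ q - 1),
          abs_of_nonneg (Real.rpow_nonneg (abs_nonneg k) _)]
        ring
      have habs := abs_sub (((k + l) ^ (q - 1) - |k| ^ (q - 2) * k))
        ((q - 1) * |k| ^ (q - 3) * k * l)
      have habs2 := abs_sub ((k + l) ^ (q - 1)) (|k| ^ (q - 2) * k)
      have hT3' : (q - 1) * (|k| ^ (q - 3) * |k|) * |l| ≤ (q - 1) * |l| ^ (q - 1) := by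
        rw [← hlq2]
        have := mul_le_mul_of_nonneg_right hCk (abs_nonneg l)
        nlinarith [abs_nonneg l, Real.rpow_nonneg (abs_nonneg l) (q-2)]
      rw [hT1] at habs2; rw [hT2] at habs2; rw [hT3] at habs
      nlinarith [habs, habs2, hA, h2l, hB, hT3']
    refine ⟨by rw [abs_zero]; exact le_max_of_le_left hMpos.le, ?_, ?_⟩
    · rw [abs_div, abs_of_pos hlq, div_le_iff₀ hlq]
      exact hbound.trans (mul_le_mul_of_nonneg_right (le_max_right _ _) hlq.le)
    · rw [div_mul_cancel₀ _ hlq.ne']; ring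
  · -- |l| < |k| : k > 0
    push_neg at hcase
    have hk : 0 < k := by
      cases abs_cases k <;> cases abs_cases l <;> linarith
    have hkabs : |k| = k := abs_of_pos hk
    simp only [if_neg (not_le.mpr hcase)]
    rcases eq_or_ne l 0 with hl0 | hl0
    · subst hl0
      have hkq : k ^ (q - 2) * k = k ^ (q - 1) := by
        rw [show q - 1 = q - 2 + 1 by ring, Real.rpow_add_one hk.ne']
      refine ⟨?_, by rw [abs_zero]; exact le_max_of_le_left hMpos.le, ?_⟩
      · have h00 : |k| ^ (q - 3) * (0:ℝ) ^ 2 = 0 := by norm_num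
        rw [h00, div_zero, abs_zero]
        exact le_max_of_le_left hMpos.le
      · rw [add_zero, hkabs]
        linear_combination -hkq
    · set t : ℝ := l / k with htdef
      have hkt : l = t * k := by rw [htdef, div_mul_cancel₀ _ hk.ne']
      have ht1 : -1 < t := by
        rw [htdef, lt_div_iff₀ hk]; linarith
      have ht2 : |t| ≤ 1 := by
        rw [htdef, abs_div, hkabs, div_le_one hk]; exact hcase.le.trans hkabs.le
      have h1t : (0:ℝ) ≤ 1 + t := by linarith
      have h3 : k ^ (q - 3) * k = k ^ (q - 2) := by
        rw [show q - 2 = q - 3 + 1 by ring, Real.rpow_add_one hk.ne']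
      have h2 : k ^ (q - 2) * k = k ^ (q - 1) := by
        rw [show q - 1 = q - 2 + 1 by ring, Real.rpow_add_one hk.ne']
      have e1 : (k + l) ^ (q - 1) = k ^ (q - 1) * (1 + t) ^ (q - 1) := by
        rw [show k + l = k * (1 + t) by rw [hkt]; ring, Real.mul_rpow hk.le h1t]
      have enum : (k + l) ^ (q - 1) - |k| ^ (q - 2) * k - (q - 1) * |k| ^ (q - 3) * k * l
          = k ^ (q - 1) * ((1 + t) ^ (q - 1) - 1 - (q - 1) * t) := by
        rw [hkabs, e1, hkt]
        linear_combination (-1 - (q - 1) * t) * h2 - (q - 1) * t * k * h3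
      have edenom : |k| ^ (q - 3) * l ^ 2 = k ^ (q - 1) * t ^ 2 := by
        rw [hkabs, hkt]
        linear_combination (t ^ 2 * k) * h3 + t ^ 2 * h2
      have hl2 : (0:ℝ) < l ^ 2 := by
        have := abs_pos.mpr hl0; nlinarith [sq_abs l]
      have hdpos : 0 < |k| ^ (q - 3) * l ^ 2 := by
        rw [hkabs]; exact mul_pos (Real.rpow_pos_of_pos hk _) hl2
      have hkq1 : (0:ℝ) < k ^ (q - 1) := Real.rpow_pos_of_pos hk _
      have hbound : |(k + l) ^ (q - 1) - |k| ^ (q - 2) * k - (q - 1) * |k| ^ (q - 3) * k * l|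
          ≤ M * (|k| ^ (q - 3) * l ^ 2) := by
        rw [enum, edenom, abs_mul, abs_of_pos hkq1]
        calc k ^ (q - 1) * |(1 + t) ^ (q - 1) - 1 - (q - 1) * t|
            ≤ k ^ (q - 1) * (M * t ^ 2) :=
              mul_le_mul_of_nonneg_left (hM t ht1 ht2) hkq1.le
          _ = M * (k ^ (q - 1) * t ^ 2) := by ring
      refine ⟨?_, by rw [abs_zero]; exact le_max_of_le_left hMpos.le, ?_⟩
      · rw [abs_div, abs_of_pos hdpos, div_le_iff₀ hdpos]
        exact hbound.trans (mul_le_mul_of_nonneg_right (le_max_left _ _) hdpos.le)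
      · rw [show ((k + l) ^ (q - 1) - |k| ^ (q - 2) * k - (q - 1) * |k| ^ (q - 3) * k * l) /
            (|k| ^ (q - 3) * l ^ 2) * |k| ^ (q - 3) * l ^ 2
            = ((k + l) ^ (q - 1) - |k| ^ (q - 2) * k - (q - 1) * |k| ^ (q - 3) * k * l) /
            (|k| ^ (q - 3) * l ^ 2) * (|k| ^ (q - 3) * l ^ 2) by ring,
          div_mul_cancel₀ _ hdpos.ne']
        ring
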